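/- Let G be a compact Hausdorff topological group, A a compact G-module, and fix n ≥ 1. Assume A has a presentation A = lim_r A_r as the inverse limit of an inverse system {A_r, φ_{rt}} over a directed poset R of compact G-modules with continuous G-equivariant transition homomorphisms, where each A_r is evenly continuous with respect to G^{n-1}, and let φ_r : A → A_r denote the natural projections. Then the map Θ_n : H^n_cts(G,A)_po → lim_r H^n_cts(G,A_r)_po given by [a] ↦ ([φ_r ∘ a])_r is a well-defined continuous bijection onto the inverse limit of the groups H^n_cts(G,A_r)_po. In particular, if A is evenly continuous with respect to G^n, then Θ_n is a homeomorphism. -/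

import Mathlib

set_option linter.unusedSectionVars false
set_option maxHeartbeats 1000000


/-- A set `F` of maps `B → A` is evenly continuous. -/
def EvenlyContinuousSet {B A : Type} [TopologicalSpace B] [TopologicalSpace A]
    (F : Set (B → A)) : Prop :=
  ∀ b : B, ∀ a : A, ∀ U ∈ nhds a, ∃ V ∈ nhds b, ∃ W ∈ nhds a,
    ∀ f ∈ F, f b ∈ W → ∀ v ∈ V, f v ∈ U

/-- The differential `d_{n+1} : M(G^n, A) → M(G^{n+1}, A)` of continuous group
cohomology (in the paper's indexing, `dmap ac n` is `d_{n+1}`). -/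
def dmap {G A : Type} [Group G] [AddCommGroup A] (ac : G → A → A) (n : ℕ)
    (f : (Fin n → G) → A) : (Fin (n + 1) → G) → A :=
  fun s =>
    ac (s 0) (f fun j => s j.succ)
      + (∑ i : Fin n, ((-1 : ℤ) ^ ((i : ℕ) + 1)) •
          f (fun j => if (j : ℕ) < (i : ℕ) then s j.castSucc
            else if (j : ℕ) = (i : ℕ) then s j.castSucc * s j.succ
            else s j.succ))
      + ((-1 : ℤ) ^ (n + 1)) • f (fun j => s j.castSucc)

section Setup

variable {G : Type} [Group G] [TopologicalSpace G]
variable {R : Type} [PartialOrder R]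
variable {Ar : R → Type} [∀ r, AddCommGroup (Ar r)] [∀ r, TopologicalSpace (Ar r)]

/-- The inverse limit `A = {(x_r) ∈ ∏ A_r | φ_{rt}(x_r) = x_t}`, with the subspace
topology of the product topology (its group operations and `G`-action are
coordinatewise). -/
abbrev InvLim (φ : ∀ ⦃r t : R⦄, t ≤ r → Ar r → Ar t) : Type :=
  {x : ∀ r, Ar r // ∀ (r t : R) (h : t ≤ r), φ h (x r) = x t}

/-- `Z^{m+1}_cts(G, lim A_r)_po`: continuous `(m+1)`-cocycles of `G` in the inverse
limit (the cocycle identity `d_{m+2} a = 0` being stated coordinatewise, since the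
limit's addition and `G`-action are coordinatewise), with the point-open topology. -/
abbrev ZLim (acr : ∀ r, G → Ar r → Ar r) (φ : ∀ ⦃r t : R⦄, t ≤ r → Ar r → Ar t)
    (m : ℕ) : Type :=
  {a : (Fin (m + 1) → G) → InvLim φ // Continuous a ∧
    ∀ (r : R) (s : Fin (m + 2) → G),
      dmap (acr r) (m + 1) (fun u => (a u).val r) s = 0}

/-- The coboundary relation on `Z^{m+1}_cts(G, lim A_r)_po` (stated coordinatewise). -/
def CohLim (acr : ∀ r, G → Ar r → Ar r) (φ : ∀ ⦃r t : R⦄, t ≤ r → Ar r → Ar t)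
    (m : ℕ) (a b : ZLim acr φ m) : Prop :=
  ∃ f : (Fin m → G) → InvLim φ, Continuous f ∧
    ∀ (s : Fin (m + 1) → G) (r : R),
      (b.val s).val r = (a.val s).val r + dmap (acr r) m (fun u => (f u).val r) s

/-- `Z^{m+1}_cts(G, A_r)_po` for an individual term of the system. -/
abbrev Zr (acr : ∀ r, G → Ar r → Ar r) (m : ℕ) (r : R) : Type :=
  {b : (Fin (m + 1) → G) → Ar r // Continuous b ∧
    ∀ s : Fin (m + 2) → G, dmap (acr r) (m + 1) b s = 0}

/-- The coboundary relation on `Z^{m+1}_cts(G, A_r)_po`. -/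
def Cohr (acr : ∀ r, G → Ar r → Ar r) (m : ℕ) (r : R) (b b' : Zr acr m r) : Prop :=
  ∃ f : (Fin m → G) → Ar r, Continuous f ∧
    ∀ s : Fin (m + 1) → G, b'.val s = b.val s + dmap (acr r) m f s

end Setup

section AuxAlg

variable {G A : Type} [Group G] [AddCommGroup A] {ac : G → A → A}

lemma ac_zero (hdist : ∀ s x y, ac s (x + y) = ac s x + ac s y) (s : G) :
    ac s 0 = 0 := by
  have h := hdist s 0 0
  rw [add_zero] at h
  exact (add_eq_right.mp h.symm)

lemma dmap_zero (hdist : ∀ s x y, ac s (x + y) = ac s x + ac s y)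
    (n : ℕ) (s : Fin (n + 1) → G) :
    dmap ac n (fun _ => 0) s = 0 := by
  unfold dmap
  rw [ac_zero hdist]
  simp only [smul_zero, Finset.sum_const_zero, add_zero]

lemma dmap_add (hdist : ∀ s x y, ac s (x + y) = ac s x + ac s y)
    (n : ℕ) (f g : (Fin n → G) → A) (s : Fin (n + 1) → G) :
    dmap ac n (fun u => f u + g u) s = dmap ac n f s + dmap ac n g s := by
  unfold dmap
  rw [hdist, smul_add]
  rw [show (∑ i : Fin n, ((-1 : ℤ) ^ ((i : ℕ) + 1)) •
      ((f fun j => if (j : ℕ) < (i : ℕ) then s j.castSucc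
            else if (j : ℕ) = (i : ℕ) then s j.castSucc * s j.succ
            else s j.succ)
        + g fun j => if (j : ℕ) < (i : ℕ) then s j.castSucc
            else if (j : ℕ) = (i : ℕ) then s j.castSucc * s j.succ
            else s j.succ)) = _ + _ from by
    rw [← Finset.sum_add_distrib]
    exact Finset.sum_congr rfl fun i _ => smul_add _ _ _]
  abel

lemma dmap_neg (hdist : ∀ s x y, ac s (x + y) = ac s x + ac s y)
    (n : ℕ) (f : (Fin n → G) → A) (s : Fin (n + 1) → G) :
    dmap ac n (fun u => -f u) s = -dmap ac n f s := by
  have h := dmap_add hdist n f (fun u => -f u) s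
  have h2 : (fun u => f u + -f u) = (fun _ : Fin n → G => (0 : A)) := by
    funext u; simp
  rw [h2, dmap_zero hdist] at h
  exact eq_neg_of_add_eq_zero_right h.symm

end AuxAlg

section AuxHom

variable {G A B : Type} [Group G] [AddCommGroup A] [AddCommGroup B]

lemma dmap_hom {acA : G → A → A} {acB : G → B → B} (ψ : A → B)
    (hadd : ∀ x y, ψ (x + y) = ψ x + ψ y)
    (hequiv : ∀ s x, ψ (acA s x) = acB s (ψ x))
    (n : ℕ) (f : (Fin n → G) → A) (s : Fin (n + 1) → G) :
    ψ (dmap acA n f s) = dmap acB n (fun u => ψ (f u)) s := by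
  let Ψ : A →+ B := AddMonoidHom.mk' ψ hadd
  have hequiv' : ∀ s x, Ψ (acA s x) = acB s (Ψ x) := hequiv
  show Ψ (dmap acA n f s) = dmap acB n (fun u => Ψ (f u)) s
  unfold dmap
  rw [map_add, map_add, map_zsmul, map_sum, hequiv']
  simp only [map_zsmul]

end AuxHom

section AuxTop

variable {G A : Type} [Group G] [TopologicalSpace G] [IsTopologicalGroup G]
  [AddCommGroup A] [TopologicalSpace A] [IsTopologicalAddGroup A]
  {ac : G → A → A}

/-- continuity of `f ↦ dmap ac n f s` in the pointwise topology -/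
lemma continuous_dmap_f (hac : Continuous fun p : G × A => ac p.1 p.2)
    (n : ℕ) (s : Fin (n + 1) → G) :
    Continuous fun f : (Fin n → G) → A => dmap ac n f s := by
  unfold dmap
  apply Continuous.add
  apply Continuous.add
  · exact hac.comp (continuous_const.prodMk (continuous_apply _))
  · exact continuous_finset_sum _ fun i _ =>
      Continuous.fun_const_smul (continuous_apply _) _
  · exact Continuous.fun_const_smul (continuous_apply _) _

/-- continuity of `dmap ac n f` as a function on `G^{n+1}`. -/
lemma continuous_dmap_s (hac : Continuous fun p : G × A => ac p.1 p.2)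
    (n : ℕ) (f : (Fin n → G) → A) (hf : Continuous f) :
    Continuous (dmap ac n f) := by
  unfold dmap
  apply Continuous.add
  apply Continuous.add
  · have h1 : Continuous fun s : Fin (n + 1) → G => (s 0, f fun j => s j.succ) :=
      (continuous_apply 0).prodMk (hf.comp (continuous_pi fun j => continuous_apply j.succ))
    exact hac.comp h1
  · refine continuous_finset_sum _ fun i _ => Continuous.fun_const_smul
      (hf.comp (continuous_pi fun j => ?_)) _
    by_cases h1 : (j : ℕ) < (i : ℕ)
    · simp only [if_pos h1]; exact continuous_apply _
    · by_cases h2 : (j : ℕ) = (i : ℕ)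
      · simp only [if_neg h1, if_pos h2]
        exact (continuous_apply _).mul (continuous_apply _)
      · simp only [if_neg h1, if_neg h2]; exact continuous_apply _
  · exact Continuous.fun_const_smul
      (hf.comp (continuous_pi fun j => continuous_apply _)) _

end AuxTop

section AuxClosed

variable {B A : Type} [TopologicalSpace B] [TopologicalSpace A]

/-- If the set of all continuous maps `B → A` is evenly continuous and `A` is
regular, then it is closed in the product (pointwise) topology. -/
lemma isClosed_continuousSet [RegularSpace A]
    (hec : EvenlyContinuousSet {f : B → A | Continuous f}) :
    IsClosed {f : B → A | Continuous f} := by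
  rw [← closure_subset_iff_isClosed]
  intro g hg
  show Continuous g
  rw [continuous_iff_continuousAt]
  intro b
  intro N hN
  rcases (closed_nhds_basis (g b)).mem_iff.mp hN with ⟨U, ⟨hU, hUc⟩, hUN⟩
  rcases hec b (g b) U hU with ⟨V, hV, W, hW, hWU⟩
  rcases mem_nhds_iff.mp hW with ⟨W₀, hW₀W, hW₀o, hgbW₀⟩
  have hgV : ∀ v ∈ V, g v ∈ U := by
    intro v hv
    have : g v ∈ closure U := by
      rw [mem_closure_iff]
      intro O hO hgvO
      have hopen : IsOpen ((fun h : B → A => h b) ⁻¹' W₀ ∩ (fun h : B → A => h v) ⁻¹' O) :=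
        ((hW₀o.preimage (continuous_apply b))).inter (hO.preimage (continuous_apply v))
      have hgin : g ∈ (fun h : B → A => h b) ⁻¹' W₀ ∩ (fun h : B → A => h v) ⁻¹' O :=
        ⟨hgbW₀, hgvO⟩
      rcases mem_closure_iff.mp hg _ hopen hgin with ⟨f, ⟨hfb, hfv⟩, hfC⟩
      exact ⟨f v, hfv, hWU f hfC (hW₀W hfb) v hv⟩
    rwa [hUc.closure_eq] at this
  have hmem : g ⁻¹' N ∈ nhds b :=
    Filter.mem_of_superset hV fun v hv => hUN (hgV v hv)
  exact hmem

end AuxClosed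

section AuxLim

variable {R : Type} [PartialOrder R] [IsDirected R (· ≤ ·)]
variable {Ar : R → Type} [∀ r, AddCommGroup (Ar r)] [∀ r, TopologicalSpace (Ar r)]
  [∀ r, T2Space (Ar r)] [∀ r, CompactSpace (Ar r)]

lemma limNonempty (φ : ∀ ⦃r t : R⦄, t ≤ r → Ar r → Ar t)
    (hφcont : ∀ (r t : R) (h : t ≤ r), Continuous (φ h))
    (hφcomp : ∀ (r t u : R) (h1 : u ≤ t) (h2 : t ≤ r) (x : Ar r),
      φ h1 (φ h2 x) = φ (h1.trans h2) x)
    {X : Type} (F : ∀ r, Set (X → Ar r))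
    (hclosed : ∀ r, IsClosed (F r)) (hne : ∀ r, (F r).Nonempty)
    (hmap : ∀ (r t : R) (h : t ≤ r), ∀ f ∈ F r, (fun x => φ h (f x)) ∈ F t) :
    ∃ g : ∀ r, X → Ar r, (∀ r, g r ∈ F r) ∧
      ∀ (r t : R) (h : t ≤ r) (x : X), φ h (g r x) = g t x := by
  classical
  rcases isEmpty_or_nonempty R with hR | hR
  · exact ⟨fun r => isEmptyElim r, fun r => isEmptyElim r, fun r => isEmptyElim r⟩
  set Z : (R ⊕ (R × R)) → Set (∀ r, X → Ar r) := fun i =>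
    match i with
    | Sum.inl r => {p | p r ∈ F r}
    | Sum.inr (r, t) => {p | ∀ (h : t ≤ r) (x : X), φ h (p r x) = p t x} with hZdef
  have hZclosed : ∀ i, IsClosed (Z i) := by
    rintro (r | ⟨r, t⟩)
    · exact (hclosed r).preimage (continuous_apply r)
    · show IsClosed {p : ∀ r, X → Ar r | ∀ (h : t ≤ r) (x : X), φ h (p r x) = p t x}
      have : {p : ∀ r, X → Ar r | ∀ (h : t ≤ r) (x : X), φ h (p r x) = p t x}
          = ⋂ (h : t ≤ r), ⋂ (x : X), {p | φ h (p r x) = p t x} := by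
        ext p; simp [Set.mem_iInter]
      rw [this]
      refine isClosed_iInter fun h => isClosed_iInter fun x => ?_
      exact isClosed_eq ((hφcont r t h).comp
        ((continuous_apply x).comp (continuous_apply r)))
        ((continuous_apply x).comp (continuous_apply t))
  have hFIP : (Set.univ ∩ ⋂ i, Z i).Nonempty := by
    rw [Set.nonempty_iff_ne_empty]
    intro h0
    obtain ⟨u, hu⟩ := isCompact_univ.elim_finite_subfamily_closed Z hZclosed h0
    rw [← Set.not_nonempty_iff_eq_empty] at hu
    apply hu
    -- collect indices
    set s : Finset R := u.biUnion (fun i =>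
      match i with
      | Sum.inl r => {r}
      | Sum.inr (r, t) => {r, t}) with hsdef
    obtain ⟨M, hM⟩ := s.exists_le
    obtain ⟨f₀, hf₀⟩ := hne M
    set p : ∀ r, X → Ar r := fun r =>
      if h : r ≤ M then (fun x => φ h (f₀ x)) else (fun _ => 0) with hpdef
    have hpmem : ∀ r, r ≤ M → p r ∈ F r := by
      intro r hr
      simp only [hpdef, dif_pos hr]
      exact hmap M r hr f₀ hf₀
    have hpval : ∀ (r : R) (hr : r ≤ M), p r = fun x => φ hr (f₀ x) := by
      intro r hr; simp only [hpdef, dif_pos hr]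
    refine ⟨p, Set.mem_univ p, ?_⟩
    rw [Set.mem_iInter₂]
    rintro (r | ⟨r, t⟩) hi
    · have hrs : r ∈ s := Finset.mem_biUnion.mpr ⟨Sum.inl r, hi, by simp⟩
      exact hpmem r (hM r hrs)
    · have hrs : r ∈ s := Finset.mem_biUnion.mpr ⟨Sum.inr (r, t), hi, by simp⟩
      have hts : t ∈ s := Finset.mem_biUnion.mpr ⟨Sum.inr (r, t), hi, by simp⟩
      intro h x
      rw [hpval r (hM r hrs), hpval t (hM t hts)]
      exact hφcomp M r t h (hM r hrs) (f₀ x)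
  obtain ⟨p, _, hp⟩ := hFIP
  rw [Set.mem_iInter] at hp
  refine ⟨p, fun r => hp (Sum.inl r), fun r t h x => hp (Sum.inr (r, t)) h x⟩

end AuxLim

section AuxCoh

variable {G : Type} [Group G] [TopologicalSpace G]
variable {R : Type} [PartialOrder R]
variable {Ar : R → Type} [∀ r, AddCommGroup (Ar r)] [∀ r, TopologicalSpace (Ar r)]
  [∀ r, IsTopologicalAddGroup (Ar r)]

lemma cohr_equiv (acr : ∀ r, G → Ar r → Ar r)
    (hdistr : ∀ r (s : G) (x y : Ar r), acr r s (x + y) = acr r s x + acr r s y)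
    (m : ℕ) (r : R) : Equivalence (Cohr acr m r) := by
  constructor
  · intro b
    refine ⟨fun _ => 0, continuous_const, fun s => ?_⟩
    rw [dmap_zero (hdistr r), add_zero]
  · rintro b b' ⟨f, hf, he⟩
    refine ⟨fun u => -f u, hf.neg, fun s => ?_⟩
    rw [dmap_neg (hdistr r), he s, add_neg_cancel_right]
  · rintro a b c ⟨f, hf, he⟩ ⟨g, hg, he'⟩
    refine ⟨fun u => f u + g u, hf.add hg, fun s => ?_⟩
    rw [dmap_add (hdistr r), he' s, he s, add_assoc]

end AuxCoh
/-- Let `G` be a compact Hausdorff group, `A` a compact `G`-module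
with a presentation `A = lim_r A_r` as inverse limit of compact `G`-modules, each
evenly continuous with respect to `G^{n-1}` (here `n = m+1 ≥ 1`), with continuous
`G`-equivariant transition homomorphisms.  Then
`Θ_n : H^n_cts(G,A)_po → lim_r H^n_cts(G,A_r)_po`, `[a] ↦ ([φ_r ∘ a])_r`, is a
well-defined continuous bijection; if moreover `A` is evenly continuous with respect
to `G^n`, then `Θ_n` is a homeomorphism. -/
theorem stmt_18
    {G : Type} [Group G] [TopologicalSpace G] [IsTopologicalGroup G]
    [CompactSpace G] [T2Space G]
    {R : Type} [PartialOrder R] [IsDirected R (· ≤ ·)]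
    (Ar : R → Type) [∀ r, AddCommGroup (Ar r)] [∀ r, TopologicalSpace (Ar r)]
    [∀ r, IsTopologicalAddGroup (Ar r)] [∀ r, T2Space (Ar r)] [∀ r, CompactSpace (Ar r)]
    (acr : ∀ r, G → Ar r → Ar r)
    (hacr : ∀ r, Continuous fun p : G × Ar r => acr r p.1 p.2)
    (honer : ∀ r (x : Ar r), acr r 1 x = x)
    (hcompr : ∀ r (s t : G) (x : Ar r), acr r (s * t) x = acr r s (acr r t x))
    (hdistr : ∀ r (s : G) (x y : Ar r), acr r s (x + y) = acr r s x + acr r s y)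
    (φ : ∀ ⦃r t : R⦄, t ≤ r → Ar r → Ar t)
    (hφcont : ∀ (r t : R) (h : t ≤ r), Continuous (φ h))
    (hφid : ∀ r : R, φ (le_refl r) = id)
    (hφcomp : ∀ (r t u : R) (h1 : u ≤ t) (h2 : t ≤ r) (x : Ar r),
      φ h1 (φ h2 x) = φ (h1.trans h2) x)
    (hφadd : ∀ (r t : R) (h : t ≤ r) (x y : Ar r), φ h (x + y) = φ h x + φ h y)
    (hφequiv : ∀ (r t : R) (h : t ≤ r) (s : G) (x : Ar r),
      φ h (acr r s x) = acr t s (φ h x))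
    -- `A` is a compact `G`-module
    (hAcomp : CompactSpace (InvLim φ))
    (m : ℕ)
    -- each `A_r` is evenly continuous with respect to `G^{n-1}`
    (hec : ∀ r, EvenlyContinuousSet {f : (Fin m → G) → Ar r | Continuous f}) :
    ∃ Θ : Quot (CohLim acr φ m) →
        {h : ∀ r, Quot (Cohr acr m r) //
          ∀ (r t : R) (hle : t ≤ r) (b : Zr acr m r), h r = Quot.mk _ b →
            ∃ c : Zr acr m t, (∀ s, c.val s = φ hle (b.val s)) ∧
              h t = Quot.mk _ c},
      -- `Θ_n` is given by `[a] ↦ ([φ_r ∘ a])_r` (well-definedness included)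
      (∀ (a : ZLim acr φ m) (r : R), ∃ c : Zr acr m r,
        (∀ s, c.val s = (a.val s).val r) ∧
        (Θ (Quot.mk _ a)).val r = Quot.mk _ c) ∧
      -- `Θ_n` is a continuous bijection
      Continuous Θ ∧
      Function.Bijective Θ ∧
      -- homeomorphism if `A` is evenly continuous with respect to `G^n`
      (EvenlyContinuousSet {f : (Fin (m + 1) → G) → InvLim φ | Continuous f} →
        IsHomeomorph Θ) := by
  classical
  -- φ is an additive homomorphism
  have hφzero : ∀ (r t : R) (h : t ≤ r), φ h 0 = 0 := by
    intro r t h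
    have h0 := hφadd r t h 0 0
    rw [add_zero] at h0
    exact add_eq_right.mp h0.symm
  have hφsub : ∀ (r t : R) (h : t ≤ r) (x y : Ar r), φ h (x - y) = φ h x - φ h y :=
    fun r t h x y => (AddMonoidHom.mk' (φ h) (hφadd r t h)).map_sub x y
  have hdφ : ∀ (r t : R) (h : t ≤ r) (n : ℕ) (f : (Fin n → G) → Ar r)
      (s : Fin (n + 1) → G),
      φ h (dmap (acr r) n f s) = dmap (acr t) n (fun u => φ h (f u)) s :=
    fun r t h n f s =>
      dmap_hom (φ h) (hφadd r t h) (fun s x => hφequiv r t h s x) n f s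
  have hequivr : ∀ r, Equivalence (Cohr acr m r) := fun r => cohr_equiv acr hdistr m r
  have mkeq : ∀ (r : R) (x y : Zr acr m r),
      Quot.mk (Cohr acr m r) x = Quot.mk (Cohr acr m r) y ↔ Cohr acr m r x y :=
    fun r x y => Quot.eq.trans ((hequivr r).eqvGen_iff)
  -- the space of continuous maps G^m → Ar r is compact
  have hCclosed : ∀ r, IsClosed {f : (Fin m → G) → Ar r | Continuous f} :=
    fun r => isClosed_continuousSet (hec r)
  have hCcompact : ∀ r, IsCompact {f : (Fin m → G) → Ar r | Continuous f} :=
    fun r => (hCclosed r).isCompact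
  -- coordinates of an inverse-limit-valued cocycle
  have zrcont : ∀ (a : ZLim acr φ m) (r : R),
      Continuous fun s => (a.val s).val r := fun a r =>
    ((continuous_apply r).comp continuous_subtype_val).comp a.prop.1
  let zr : ZLim acr φ m → ∀ r, Zr acr m r := fun a r =>
    ⟨fun s => (a.val s).val r, zrcont a r, a.prop.2 r⟩
  have hzrφ : ∀ (a : ZLim acr φ m) (r t : R) (h : t ≤ r) (s : Fin (m + 1) → G),
      φ h ((zr a r).val s) = (zr a t).val s := fun a r t h s => (a.val s).prop r t h
  -- the property defining the target subtype
  have Pprop : ∀ a : ZLim acr φ m, ∀ (r t : R) (hle : t ≤ r) (b : Zr acr m r),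
      (fun r => Quot.mk (Cohr acr m r) (zr a r)) r = Quot.mk _ b →
      ∃ c : Zr acr m t, (∀ s, c.val s = φ hle (b.val s)) ∧
        (fun r => Quot.mk (Cohr acr m r) (zr a r)) t = Quot.mk _ c := by
    intro a r t hle b hb
    refine ⟨⟨fun s => φ hle (b.val s), (hφcont r t hle).comp b.prop.1, fun s' => ?_⟩,
      fun s => rfl, ?_⟩
    · rw [← hdφ r t hle (m + 1) b.val s', b.prop.2 s', hφzero r t hle]
    · simp only
      rw [mkeq] at hb ⊢
      obtain ⟨f, hf, he⟩ := hb
      refine ⟨fun u => φ hle (f u), (hφcont r t hle).comp hf, fun s => ?_⟩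
      show φ hle (b.val s) = (zr a t).val s + dmap (acr t) m (fun u => φ hle (f u)) s
      rw [← hzrφ a r t hle s, ← hdφ r t hle m f s, ← hφadd r t hle, ← he s]
  let Θfun : ZLim acr φ m →
      {h : ∀ r, Quot (Cohr acr m r) //
        ∀ (r t : R) (hle : t ≤ r) (b : Zr acr m r), h r = Quot.mk _ b →
          ∃ c : Zr acr m t, (∀ s, c.val s = φ hle (b.val s)) ∧
            h t = Quot.mk _ c} :=
    fun a => ⟨fun r => Quot.mk (Cohr acr m r) (zr a r), Pprop a⟩
  have hwd : ∀ a b : ZLim acr φ m, CohLim acr φ m a b → Θfun a = Θfun b := by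
    rintro a b ⟨f, hf, he⟩
    apply Subtype.ext
    funext r
    apply Quot.sound
    exact ⟨fun u => (f u).val r,
      ((continuous_apply r).comp continuous_subtype_val).comp hf,
      fun s => he s r⟩
  have hinj : Function.Injective (Quot.lift Θfun hwd) := by
    intro qa qb hab
    obtain ⟨a, rfl⟩ := Quot.exists_rep qa
    obtain ⟨b, rfl⟩ := Quot.exists_rep qb
    have hco : ∀ r, Cohr acr m r (zr a r) (zr b r) := by
      intro r
      rw [← mkeq]
      exact congrFun (congrArg Subtype.val hab) r
    set F : ∀ r, Set ((Fin m → G) → Ar r) := fun r =>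
      {f | Continuous f ∧ ∀ s, dmap (acr r) m f s =
        (zr b r).val s - (zr a r).val s} with hFdef
    have hFclosed : ∀ r, IsClosed (F r) := by
      intro r
      have heq : F r = {f : (Fin m → G) → Ar r | Continuous f} ∩
          ⋂ s, {f | dmap (acr r) m f s = (zr b r).val s - (zr a r).val s} := by
        ext f
        simp only [hFdef, Set.mem_setOf_eq, Set.mem_inter_iff, Set.mem_iInter]
      rw [heq]
      exact (hCclosed r).inter (isClosed_iInter fun s =>
        isClosed_eq (continuous_dmap_f (hacr r) m s) continuous_const)
    have hFne : ∀ r, (F r).Nonempty := by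
      intro r
      obtain ⟨f, hf, he⟩ := hco r
      exact ⟨f, hf, fun s => by rw [he s]; abel⟩
    have hFmap : ∀ (r t : R) (h : t ≤ r), ∀ f ∈ F r, (fun x => φ h (f x)) ∈ F t := by
      rintro r t h f ⟨hf, he⟩
      refine ⟨(hφcont r t h).comp hf, fun s => ?_⟩
      rw [← hdφ r t h m f s, he s, hφsub r t h, hzrφ a r t h s, hzrφ b r t h s]
    obtain ⟨g, hgmem, hgcomp⟩ := limNonempty φ hφcont hφcomp F hFclosed hFne hFmap
    refine Quot.sound ⟨fun u => ⟨fun r => g r u, fun r t h => hgcomp r t h u⟩, ?_, ?_⟩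
    · exact Continuous.subtype_mk (continuous_pi fun r => (hgmem r).1) _
    · intro s r
      have hd := (hgmem r).2 s
      show (zr b r).val s = (zr a r).val s + dmap (acr r) m (fun u => g r u) s
      rw [show (fun u => g r u) = g r from rfl, hd]
      abel
  have hsurj : Function.Surjective (Quot.lift Θfun hwd) := by
    rintro ⟨h, hp⟩
    choose bfun hbfun using fun r => Quot.exists_rep (h r)
    set K : ∀ r, Set ((Fin (m + 1) → G) → Ar r) := fun r =>
      {c | (∀ s', dmap (acr r) (m + 1) c s' = 0) ∧
        ∃ f, Continuous f ∧ c = fun s => (bfun r).val s + dmap (acr r) m f s} with hKdef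
    have hKclosed : ∀ r, IsClosed (K r) := by
      intro r
      have heq : K r = (⋂ s', {c | dmap (acr r) (m + 1) c s' = 0}) ∩
          ((fun f => fun s => (bfun r).val s + dmap (acr r) m f s) ''
            {f : (Fin m → G) → Ar r | Continuous f}) := by
        ext c
        simp only [hKdef, Set.mem_setOf_eq, Set.mem_inter_iff, Set.mem_iInter,
          Set.mem_image]
        constructor
        · rintro ⟨h1, f, hf, hfe⟩; exact ⟨h1, f, hf, hfe.symm⟩
        · rintro ⟨h1, f, hf, hfe⟩; exact ⟨h1, f, hf, hfe.symm⟩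
      rw [heq]
      refine (isClosed_iInter fun s' =>
        isClosed_eq (continuous_dmap_f (hacr r) (m + 1) s') continuous_const).inter ?_
      refine IsCompact.isClosed ?_
      exact (hCcompact r).image (continuous_pi fun s =>
        continuous_const.add (continuous_dmap_f (hacr r) m s))
    have hKne : ∀ r, (K r).Nonempty := by
      intro r
      refine ⟨(bfun r).val, (bfun r).prop.2, fun _ => 0, continuous_const, ?_⟩
      funext s
      rw [dmap_zero (hdistr r), add_zero]
    have hKmap : ∀ (r t : R) (hle : t ≤ r), ∀ c ∈ K r, (fun x => φ hle (c x)) ∈ K t := by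
      rintro r t hle c ⟨h1, f, hf, hfe⟩
      constructor
      · intro s'
        rw [← hdφ r t hle (m + 1) c s', h1 s', hφzero]
      · obtain ⟨c', hc'val, hc'eq⟩ := hp r t hle (bfun r) (hbfun r).symm
        have hbt : Quot.mk _ (bfun t) = Quot.mk _ c' := (hbfun t).trans hc'eq
        rw [mkeq] at hbt
        obtain ⟨g0, hg0, hge⟩ := hbt
        refine ⟨fun u => g0 u + φ hle (f u), hg0.add ((hφcont r t hle).comp hf), ?_⟩
        funext s
        rw [dmap_add (hdistr t)]
        calc φ hle (c s)
            = φ hle ((bfun r).val s + dmap (acr r) m f s) := by rw [hfe]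
          _ = φ hle ((bfun r).val s) + φ hle (dmap (acr r) m f s) := hφadd r t hle _ _
          _ = c'.val s + dmap (acr t) m (fun u => φ hle (f u)) s := by
              rw [hc'val s, hdφ r t hle m f s]
          _ = ((bfun t).val s + dmap (acr t) m g0 s) +
              dmap (acr t) m (fun u => φ hle (f u)) s := by rw [hge s]
          _ = (bfun t).val s + (dmap (acr t) m g0 s +
              dmap (acr t) m (fun u => φ hle (f u)) s) := by abel
    obtain ⟨g, hgmem, hgcomp⟩ := limNonempty φ hφcont hφcomp K hKclosed hKne hKmap
    have hgcont : ∀ r, Continuous (g r) := by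
      intro r
      obtain ⟨-, f, hf, hfe⟩ := hgmem r
      rw [hfe]
      exact ((bfun r).prop.1).add (continuous_dmap_s (hacr r) m f hf)
    refine ⟨Quot.mk _ ⟨fun s => ⟨fun r => g r s, fun r t hle => hgcomp r t hle s⟩,
      Continuous.subtype_mk (continuous_pi fun r => hgcont r) _,
      fun r s' => (hgmem r).1 s'⟩, ?_⟩
    apply Subtype.ext
    funext r
    show Quot.mk _ (zr _ r) = h r
    rw [← hbfun r, mkeq]
    obtain ⟨f, hf, hfe⟩ := (hgmem r).2
    exact (hequivr r).symm ⟨f, hf, fun s => congrFun hfe s⟩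
  refine ⟨Quot.lift Θfun hwd, fun a r => ⟨zr a r, fun s => rfl, rfl⟩, ?_, ⟨hinj, hsurj⟩, ?_⟩
  · -- continuity
    apply continuous_quot_lift
    apply Continuous.subtype_mk
    apply continuous_pi
    intro r
    apply continuous_quot_mk.comp
    apply Continuous.subtype_mk
    apply continuous_pi
    intro s
    exact ((continuous_apply r).comp continuous_subtype_val).comp
      ((continuous_apply s).comp continuous_subtype_val)
  · -- homeomorphism
    intro hecA
    haveI : CompactSpace (InvLim φ) := hAcomp
    have hZclosed : IsClosed {a : (Fin (m + 1) → G) → InvLim φ | Continuous a ∧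
        ∀ (r : R) (s : Fin (m + 2) → G),
          dmap (acr r) (m + 1) (fun u => (a u).val r) s = 0} := by
      have heq : {a : (Fin (m + 1) → G) → InvLim φ | Continuous a ∧
          ∀ (r : R) (s : Fin (m + 2) → G),
            dmap (acr r) (m + 1) (fun u => (a u).val r) s = 0} =
          {a : (Fin (m + 1) → G) → InvLim φ | Continuous a} ∩
          ⋂ (r : R), ⋂ (s : Fin (m + 2) → G),
            {a | dmap (acr r) (m + 1) (fun u => (a u).val r) s = 0} := by
        ext a
        simp only [Set.mem_setOf_eq, Set.mem_inter_iff, Set.mem_iInter]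
      rw [heq]
      refine (isClosed_continuousSet hecA).inter ?_
      refine isClosed_iInter fun r => isClosed_iInter fun s => ?_
      exact isClosed_eq ((continuous_dmap_f (hacr r) (m + 1) s).comp
        (continuous_pi fun u => (continuous_apply r).comp
          (continuous_subtype_val.comp (continuous_apply u)))) continuous_const
    haveI hZLcomp : CompactSpace (ZLim acr φ m) :=
      isCompact_iff_compactSpace.mp hZclosed.isCompact
    haveI hQcomp : CompactSpace (Quot (CohLim acr φ m)) := by
      constructor
      have h1 : (Set.univ : Set (Quot (CohLim acr φ m))) =
          Quot.mk _ '' Set.univ := by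
        rw [Set.image_univ]
        exact (Set.range_eq_univ.mpr fun q => Quot.exists_rep q).symm
      rw [h1]
      exact isCompact_univ.image continuous_quot_mk
    -- each H^n(G, A_r) is Hausdorff
    have hopenmap : ∀ r, IsOpenMap (Quot.mk (Cohr acr m r)) := by
      intro r O hO
      rw [isOpen_coinduced]
      have hsat : Quot.mk (Cohr acr m r) ⁻¹' (Quot.mk (Cohr acr m r) '' O) =
          {x : Zr acr m r | ∃ y ∈ O, Cohr acr m r y x} := by
        ext x
        simp only [Set.mem_preimage, Set.mem_image, Set.mem_setOf_eq]
        constructor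
        · rintro ⟨y, hy, he⟩; exact ⟨y, hy, (mkeq r y x).mp he⟩
        · rintro ⟨y, hy, he⟩; exact ⟨y, hy, (mkeq r y x).mpr he⟩
      rw [hsat]
      obtain ⟨O', hO', hOeq⟩ := isOpen_induced_iff.mp hO
      rw [isOpen_iff_forall_mem_open]
      rintro x ⟨y, hyO, f, hf, he⟩
      -- d (d f) = 0 for this particular f
      have hddf : ∀ s', dmap (acr r) (m + 1) (dmap (acr r) m f) s' = 0 := by
        intro s'
        have h4 : dmap (acr r) (m + 1) x.val s' =
            dmap (acr r) (m + 1) y.val s' +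
            dmap (acr r) (m + 1) (dmap (acr r) m f) s' := by
          rw [← dmap_add (hdistr r) (m + 1) y.val (dmap (acr r) m f) s']
          congr 1
          funext u
          exact he u
        rw [x.prop.2 s', y.prop.2 s', zero_add] at h4
        exact h4.symm
      refine ⟨{z : Zr acr m r | (fun s => z.val s - dmap (acr r) m f s) ∈ O'},
        ?_, ?_, ?_⟩
      · intro z hz
        refine ⟨⟨fun s => z.val s - dmap (acr r) m f s,
          z.prop.1.sub (continuous_dmap_s (hacr r) m f hf), fun s' => ?_⟩, ?_, ?_⟩
        · have hsub : dmap (acr r) (m + 1)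
              (fun s => z.val s - dmap (acr r) m f s) s' =
              dmap (acr r) (m + 1) z.val s' -
              dmap (acr r) (m + 1) (dmap (acr r) m f) s' := by
            rw [sub_eq_add_neg, ← dmap_neg (hdistr r) (m + 1) (dmap (acr r) m f) s',
              ← dmap_add (hdistr r)]
            congr 1
            funext u
            rw [sub_eq_add_neg]
          rw [hsub, z.prop.2 s', hddf s', sub_zero]
        · show _ ∈ O
          rw [← hOeq]
          exact hz
        · refine ⟨f, hf, fun s => ?_⟩
          show z.val s = (z.val s - dmap (acr r) m f s) + dmap (acr r) m f s
          abel
      · have hcont : Continuous fun z : Zr acr m r =>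
            (fun s => z.val s - dmap (acr r) m f s) := by
          apply continuous_pi
          intro s
          exact ((continuous_apply s).comp continuous_subtype_val).sub continuous_const
        exact hO'.preimage hcont
      · show (fun s => x.val s - dmap (acr r) m f s) ∈ O'
        have hxy : (fun s => x.val s - dmap (acr r) m f s) = y.val := by
          funext s
          rw [he s]
          abel
        rw [hxy, ← Set.mem_preimage, hOeq]
        exact hyO
    have hgraph : ∀ r, IsClosed {p : Zr acr m r × Zr acr m r |
        Cohr acr m r p.1 p.2} := by
      intro r
      have heq : {p : Zr acr m r × Zr acr m r | Cohr acr m r p.1 p.2} =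
          (fun p : Zr acr m r × Zr acr m r =>
            fun s => p.2.val s - p.1.val s) ⁻¹'
          ((fun f => dmap (acr r) m f) '' {f : (Fin m → G) → Ar r | Continuous f}) := by
        ext p
        simp only [Set.mem_preimage, Set.mem_image, Set.mem_setOf_eq]
        constructor
        · rintro ⟨f, hf, he⟩
          refine ⟨f, hf, funext fun s => ?_⟩
          rw [he s]
          abel
        · rintro ⟨f, hf, he⟩
          refine ⟨f, hf, fun s => ?_⟩
          have := congrFun he s
          rw [this]
          abel
      rw [heq]
      refine IsClosed.preimage ?_ ?_
      · exact continuous_pi fun s =>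
          ((continuous_apply s).comp (continuous_subtype_val.comp continuous_snd)).sub
          ((continuous_apply s).comp (continuous_subtype_val.comp continuous_fst))
      · exact ((hCcompact r).image
          (continuous_pi fun s => continuous_dmap_f (hacr r) m s)).isClosed
    haveI hT2r : ∀ r, T2Space (Quot (Cohr acr m r)) := by
      intro r
      constructor
      intro p q hpq
      obtain ⟨x, rfl⟩ := Quot.exists_rep p
      obtain ⟨y, rfl⟩ := Quot.exists_rep q
      have hxy : (x, y) ∉ {p : Zr acr m r × Zr acr m r | Cohr acr m r p.1 p.2} :=
        fun hc => hpq (Quot.sound hc)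
      rcases isOpen_prod_iff.mp (hgraph r).isOpen_compl x y hxy with
        ⟨U, V, hU, hV, hxU, hyV, hUV⟩
      refine ⟨Quot.mk _ '' U, Quot.mk _ '' V, hopenmap r U hU, hopenmap r V hV,
        ⟨x, hxU, rfl⟩, ⟨y, hyV, rfl⟩, ?_⟩
      rw [Set.disjoint_left]
      rintro z ⟨u, hu, hz1⟩ ⟨v, hv, hz2⟩
      have hco : Cohr acr m r u v := (mkeq r u v).mp (hz1.trans hz2.symm)
      exact hUV (Set.mk_mem_prod hu hv) hco
    -- conclude
    have hΘcont : Continuous (Quot.lift Θfun hwd) := by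
      apply continuous_quot_lift
      apply Continuous.subtype_mk
      apply continuous_pi
      intro r
      apply continuous_quot_mk.comp
      apply Continuous.subtype_mk
      apply continuous_pi
      intro s
      exact ((continuous_apply r).comp continuous_subtype_val).comp
        ((continuous_apply s).comp continuous_subtype_val)
    have hbij : Function.Bijective (Quot.lift Θfun hwd) := ⟨hinj, hsurj⟩
    have hclosedmap : IsClosedMap (Quot.lift Θfun hwd) := hΘcont.isClosedMap
    refine ⟨hΘcont, ?_, hbij⟩
    intro U hU
    have h1 : Quot.lift Θfun hwd '' Uᶜ = (Quot.lift Θfun hwd '' U)ᶜ :=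
      Set.image_compl_eq hbij
    have h2 : Quot.lift Θfun hwd '' U = (Quot.lift Θfun hwd '' Uᶜ)ᶜ := by
      rw [h1, compl_compl]
    rw [h2]
    exact (hclosedmap _ hU.isClosed_compl).isOpen_compl
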